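/- Let A and B be two quantum channels (completely positive trace-preserving maps) on a finite-dimensional Hilbert space H = H_S ⊗ H_0 satisfying the operator ordering (1−υ)A ⪯ B ⪯ (1+υ)A as completely positive maps, for some υ ∈ [0,1). Then for any positive semidefinite Hermitian X on H and any Y = Y_S ⊗ I_0 with Y_S positive semidefinite Hermitian, ‖Tr_{H_S}[(A−B)(X)·Y]‖₁ ≤ υ·‖Tr_{H_S}[A(X)·Y]‖₁. -/

import Mathlib

open Matrix
open scoped Kronecker ComplexOrder

/-- Trace norm (Schatten 1-norm) of a complex matrix: `Tr √(AᴴA)`. -/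
noncomputable def traceNorm {n : Type*} [Fintype n] [DecidableEq n]
    (A : Matrix n n ℂ) : ℝ :=
  (((Matrix.posSemidef_conjTranspose_mul_self A).1.eigenvectorUnitary.1 *
      diagonal (((↑) : ℝ → ℂ) ∘ (Real.sqrt ·) ∘ (Matrix.posSemidef_conjTranspose_mul_self A).1.eigenvalues) *
      (star (Matrix.posSemidef_conjTranspose_mul_self A).1.eigenvectorUnitary :
        Matrix n n ℂ)).trace).re

/-- Von Neumann entropy (natural log) of a matrix, via eigenvalues when Hermitian. -/
noncomputable def vNEntropy {n : Type*} [Fintype n] [DecidableEq n]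
    (ρ : Matrix n n ℂ) : ℝ := by
  classical exact
    if h : ρ.IsHermitian then ∑ i, Real.negMulLog (h.eigenvalues i) else 0

/-- The partial trace over the first tensor factor. -/
noncomputable def ptraceS {s o : Type*} [Fintype s]
    (M : Matrix (s × o) (s × o) ℂ) : Matrix o o ℂ :=
  Matrix.of fun i j => ∑ a : s, M (a, i) (a, j)

/-- The unitary conjugation channel `ρ ↦ U ρ Uᴴ` as a linear endomorphism. -/
noncomputable def uch {n : Type*} [Fintype n] [DecidableEq n]
    (U : Matrix n n ℂ) : Matrix n n ℂ →ₗ[ℂ] Matrix n n ℂ where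
  toFun := fun ρ => U * ρ * Uᴴ
  map_add' := fun ρ σ => by simp [Matrix.add_mul, Matrix.mul_add]
  map_smul' := fun c ρ => by simp [Matrix.mul_smul, Matrix.smul_mul]

/-- Extension `Φ ⊗ id` of a map on matrices to a bipartite system (function form). -/
noncomputable def tensorExt {n r : Type*}
    (Φ : Matrix n n ℂ →ₗ[ℂ] Matrix n n ℂ)
    (M : Matrix (n × r) (n × r) ℂ) : Matrix (n × r) (n × r) ℂ :=
  Matrix.of fun p q => Φ (Matrix.of fun a b => M (a, p.2) (b, q.2)) p.1 q.1

/-- Diamond norm: supremum of trace norm of `(Φ ⊗ id)` over bipartite states,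
with reference system of the same dimension. -/
noncomputable def diamondNorm {n : Type*} [Fintype n] [DecidableEq n]
    (Φ : Matrix n n ℂ →ₗ[ℂ] Matrix n n ℂ) : ℝ :=
  ⨆ M : {M : Matrix (n × n) (n × n) ℂ // M.PosSemidef ∧ M.trace = 1},
    traceNorm (tensorExt Φ M.1)

/-- Trace-preserving map on matrices. -/
def IsTracePreserving {n : Type*} [Fintype n]
    (Φ : Matrix n n ℂ →ₗ[ℂ] Matrix n n ℂ) : Prop :=
  ∀ X, (Φ X).trace = X.trace

/-- Complete positivity (via the extension to an equal-size reference system). -/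
def IsCompletelyPositive {n : Type*} [Fintype n] [DecidableEq n]
    (Φ : Matrix n n ℂ →ₗ[ℂ] Matrix n n ℂ) : Prop :=
  ∀ M : Matrix (n × n) (n × n) ℂ, M.PosSemidef → (tensorExt Φ M).PosSemidef

/-- Operator (spectral) norm of a complex matrix. -/
noncomputable def opNorm {n : Type*} [Fintype n] [DecidableEq n]
    (A : Matrix n n ℂ) : ℝ :=
  ‖Matrix.toEuclideanCLM (𝕜 := ℂ) A‖

open scoped MatrixOrder

lemma traceNorm_eq_sqrt {n : Type*} [Fintype n] [DecidableEq n]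
    (A : Matrix n n ℂ) : traceNorm A = (CFC.sqrt (Aᴴ * A)).trace.re := by
  rw [traceNorm, CFC.sqrt_eq_cfc,
    cfc_nnreal_eq_real _ _ (Matrix.posSemidef_conjTranspose_mul_self A).nonneg,
    (Matrix.posSemidef_conjTranspose_mul_self A).1.cfc_eq, IsHermitian.cfc, Unitary.conjStarAlgAut_apply]
  congr! 4 with i
  congr 1
  funext i
  simp only [Function.comp_apply, Real.coe_sqrt, Real.coe_toNNReal']
  congr 2
  exact (max_eq_left ((Matrix.posSemidef_conjTranspose_mul_self A).eigenvalues_nonneg i)).symm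

lemma cp_psd {n : Type*} [Fintype n] [DecidableEq n]
    {Φ : Matrix n n ℂ →ₗ[ℂ] Matrix n n ℂ} (hΦ : IsCompletelyPositive Φ)
    {X : Matrix n n ℂ} (hX : X.PosSemidef) : (Φ X).PosSemidef := by
  rcases isEmpty_or_nonempty n with h | h
  · refine Matrix.PosSemidef.of_dotProduct_mulVec_nonneg ?_ ?_
    · ext i j; exact (IsEmpty.false i).elim
    · intro x; simp [dotProduct]
  obtain ⟨i0⟩ := h
  set M : Matrix (n × n) (n × n) ℂ :=
    Matrix.of fun p q => (if p.2 = i0 ∧ q.2 = i0 then 1 else 0) * X p.1 q.1 with hM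
  have hMpsd : M.PosSemidef := by
    refine Matrix.PosSemidef.of_dotProduct_mulVec_nonneg ?_ ?_
    · ext ⟨a, p⟩ ⟨b, q⟩
      simp only [hM, conjTranspose_apply, of_apply, star_mul', star_one, star_zero, and_comm,
        apply_ite (star : ℂ → ℂ), star_one, star_zero]
      rw [← Matrix.conjTranspose_apply, hX.1]
    · intro x
      have key : star x ⬝ᵥ (M *ᵥ x) =
          star (fun a => x (a, i0)) ⬝ᵥ (X *ᵥ fun a => x (a, i0)) := by
        simp only [dotProduct, Matrix.mulVec, dotProduct, hM, of_apply,
          Fintype.sum_prod_type, Pi.star_apply]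
        rw [Finset.sum_comm]
        simp [Finset.mul_sum, Finset.sum_mul, mul_comm, mul_left_comm, Finset.sum_ite_eq',
          ite_and, mul_ite]
      rw [key]
      exact hX.dotProduct_mulVec_nonneg _
  have hT := hΦ M hMpsd
  have hTeq : ∀ a b p q, tensorExt Φ M (a, p) (b, q)
      = (if p = i0 ∧ q = i0 then 1 else 0) * Φ X a b := by
    intro a b p q
    have h2 : (Matrix.of fun a b => M (a, p) (b, q))
        = ((if p = i0 ∧ q = i0 then (1:ℂ) else 0) • X) := by
      ext a b; simp [hM]
    simp only [tensorExt, of_apply, h2, _root_.map_smul, Matrix.smul_apply, smul_eq_mul]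
  refine Matrix.PosSemidef.of_dotProduct_mulVec_nonneg ?_ ?_
  · ext a b
    have := congrFun (congrFun hT.1 (a, i0)) (b, i0)
    simpa [conjTranspose_apply, hTeq] using this
  · intro x
    have hq := hT.dotProduct_mulVec_nonneg (fun p : n × n => if p.2 = i0 then x p.1 else 0)
    have key : star (fun p : n × n => if p.2 = i0 then x p.1 else 0) ⬝ᵥ
        (tensorExt Φ M *ᵥ fun p : n × n => if p.2 = i0 then x p.1 else 0)
        = star x ⬝ᵥ (Φ X *ᵥ x) := by
      simp only [dotProduct, Matrix.mulVec, dotProduct, Fintype.sum_prod_type,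
        Pi.star_apply]
      simp [hTeq, apply_ite, ite_and, mul_ite, Finset.sum_ite_eq', Finset.mul_sum,
        mul_comm, mul_left_comm]
    rw [key] at hq
    exact hq


lemma ptraceS_psd {s o : Type*} [Fintype s] [DecidableEq s] [Fintype o] [DecidableEq o]
    {M : Matrix (s × o) (s × o) ℂ} (hM : M.PosSemidef) : (ptraceS M).PosSemidef := by
  refine Matrix.PosSemidef.of_dotProduct_mulVec_nonneg ?_ ?_
  · ext i j
    simp only [conjTranspose_apply, ptraceS, of_apply, star_sum]
    refine Finset.sum_congr rfl fun a _ => ?_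
    rw [← Matrix.conjTranspose_apply, hM.1]
  · intro x
    have key : star x ⬝ᵥ (ptraceS M *ᵥ x) =
        ∑ a : s, star (fun p : s × o => if p.1 = a then x p.2 else 0) ⬝ᵥ
          (M *ᵥ fun p : s × o => if p.1 = a then x p.2 else 0) := by
      simp only [dotProduct, Matrix.mulVec, dotProduct, ptraceS, of_apply,
        Fintype.sum_prod_type, Pi.star_apply]
      simp [apply_ite, mul_ite, ite_mul, Finset.sum_ite_eq', Finset.mul_sum, Finset.sum_mul,
        mul_comm, mul_left_comm]
      exact (Finset.sum_congr rfl fun x1 _ => Finset.sum_comm).trans Finset.sum_comm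
    rw [key]
    exact Finset.sum_nonneg fun a _ => hM.dotProduct_mulVec_nonneg _

lemma ptraceS_mul_kron {s o : Type*} [Fintype s] [DecidableEq s] [Fintype o] [DecidableEq o]
    (M : Matrix (s × o) (s × o) ℂ) {YS : Matrix s s ℂ} (hYS : YS.PosSemidef) :
    ptraceS (M * (YS ⊗ₖ (1 : Matrix o o ℂ))) =
      ptraceS ((CFC.sqrt YS ⊗ₖ (1 : Matrix o o ℂ)) * M *
        ((CFC.sqrt YS ⊗ₖ (1 : Matrix o o ℂ)))ᴴ) := by
  have hR : (CFC.sqrt YS).conjTranspose = CFC.sqrt YS :=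
    (Matrix.nonneg_iff_posSemidef.mp (CFC.sqrt_nonneg YS)).1
  have hRR : ∀ c b, ∑ a, CFC.sqrt YS c a * CFC.sqrt YS a b = YS c b := by
    intro c b
    have := congrFun (congrFun (CFC.sqrt_mul_sqrt_self YS hYS.nonneg) c) b
    simpa [Matrix.mul_apply] using this
  ext i j
  simp only [ptraceS, of_apply, Matrix.mul_apply, Fintype.sum_prod_type, kroneckerMap_apply,
    Matrix.one_apply, conjTranspose_apply, mul_ite, ite_mul, mul_one, mul_zero, one_mul,
    zero_mul, Finset.sum_ite_eq', Finset.sum_ite_eq, Finset.mem_univ, if_true]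
  have hconj : ∀ a b, star (CFC.sqrt YS a b) = CFC.sqrt YS b a := fun a b => by
    rw [← Matrix.conjTranspose_apply, hR]
  simp only [apply_ite (star : ℂ → ℂ), star_zero, mul_ite, mul_zero, Finset.sum_ite_eq,
    Finset.mem_univ, if_true, hconj]
  rw [Finset.sum_comm]
  conv_rhs => rw [Finset.sum_comm]
  refine Finset.sum_congr rfl fun b _ => ?_
  simp only [Finset.sum_mul]
  rw [Finset.sum_comm]
  refine Finset.sum_congr rfl fun c _ => ?_
  rw [← hRR b c, Finset.mul_sum]
  refine Finset.sum_congr rfl fun a _ => by ring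


lemma traceNorm_of_psd {n : Type*} [Fintype n] [DecidableEq n]
    {P : Matrix n n ℂ} (hP : P.PosSemidef) : traceNorm P = P.trace.re := by
  have h : P = CFC.sqrt (Pᴴ * P) := ((CFC.sqrt_eq_iff _ _
    (Matrix.posSemidef_conjTranspose_mul_self P).nonneg hP.nonneg).2 (by rw [hP.1])).symm
  rw [traceNorm_eq_sqrt, ← h]

lemma traceNorm_of_hermitian {n : Type*} [Fintype n] [DecidableEq n]
    {G : Matrix n n ℂ} (hG : G.IsHermitian) :
    traceNorm G = ∑ i, |hG.eigenvalues i| := by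
  set V : Matrix n n ℂ := (Matrix.IsHermitian.eigenvectorUnitary hG : Matrix n n ℂ) with hV
  have hVV : V * star V = 1 := Matrix.mem_unitaryGroup_iff.mp (Matrix.IsHermitian.eigenvectorUnitary hG).2
  have hVV' : star V * V = 1 := Matrix.mem_unitaryGroup_iff'.mp (Matrix.IsHermitian.eigenvectorUnitary hG).2
  set S : Matrix n n ℂ := V * Matrix.diagonal (fun i => ((|hG.eigenvalues i| : ℝ) : ℂ)) * star V with hS
  have hSpsd : S.PosSemidef := by
    have hd : Matrix.PosSemidef (Matrix.diagonal (fun i => ((|hG.eigenvalues i| : ℝ) : ℂ))) :=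
      Matrix.posSemidef_diagonal_iff.mpr fun i => by
        rw [Complex.zero_le_real]; exact abs_nonneg _
    rw [hS, Matrix.star_eq_conjTranspose]; exact hd.mul_mul_conjTranspose_same V
  have key : ∀ D1 D2 : Matrix n n ℂ,
      V * D1 * star V * (V * D2 * star V) = V * (D1 * D2) * star V := by
    intro D1 D2
    rw [show V * D1 * star V * (V * D2 * star V) = V * D1 * (star V * V) * D2 * star V from by
      noncomm_ring, hVV']
    noncomm_ring
  have hdd : Matrix.diagonal (fun i => ((|hG.eigenvalues i| : ℝ) : ℂ)) *
      Matrix.diagonal (fun i => ((|hG.eigenvalues i| : ℝ) : ℂ)) =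
      Matrix.diagonal (RCLike.ofReal ∘ hG.eigenvalues) *
      Matrix.diagonal (RCLike.ofReal ∘ hG.eigenvalues) := by
    rw [Matrix.diagonal_mul_diagonal, Matrix.diagonal_mul_diagonal]
    ext i j
    rcases eq_or_ne i j with rfl | h
    · simp only [Matrix.diagonal_apply_eq, Pi.mul_apply, Function.comp_apply]
      norm_cast; exact congrArg RCLike.ofReal (abs_mul_abs_self (hG.eigenvalues i))
    · simp [Matrix.diagonal_apply_ne _ h]
  have hsq : S ^ 2 = Gᴴ * G := by
    calc S ^ 2 = V * (Matrix.diagonal (fun i => ((|hG.eigenvalues i| : ℝ) : ℂ)) *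
          Matrix.diagonal (fun i => ((|hG.eigenvalues i| : ℝ) : ℂ))) * star V := by
          rw [pow_two, hS, key]
      _ = V * (Matrix.diagonal (RCLike.ofReal ∘ hG.eigenvalues) *
          Matrix.diagonal (RCLike.ofReal ∘ hG.eigenvalues)) * star V := by rw [hdd]
      _ = G * G := by conv_rhs => rw [hG.spectral_theorem, Unitary.conjStarAlgAut_apply, ← hV, key]
      _ = Gᴴ * G := by rw [hG.eq]
  have hSsqrt : S = CFC.sqrt (Gᴴ * G) :=
    ((CFC.sqrt_eq_iff _ _ (Matrix.posSemidef_conjTranspose_mul_self G).nonneg hSpsd.nonneg).2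
      (by rw [← pow_two]; exact hsq)).symm
  rw [traceNorm_eq_sqrt, ← hSsqrt, hS, Matrix.trace_mul_comm, ← Matrix.mul_assoc, hVV', one_mul]
  simp [Matrix.trace, Complex.ofReal_sum]

lemma key_ineq {n : Type*} [Fintype n] [DecidableEq n] (υ : ℝ) {G P : Matrix n n ℂ}
    (hP : P.PosSemidef)
    (h1 : (((υ : ℝ) : ℂ) • P - G).PosSemidef)
    (h2 : (((υ : ℝ) : ℂ) • P + G).PosSemidef) :
    traceNorm G ≤ υ * traceNorm P := by
  have hsm : (((υ : ℝ) : ℂ) • P).IsHermitian := by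
    rw [Matrix.IsHermitian, Matrix.conjTranspose_smul, hP.1, Complex.star_def,
      Complex.conj_ofReal]
  have hG : G.IsHermitian := by simpa [sub_sub_cancel] using hsm.sub h1.1
  rw [traceNorm_of_hermitian hG, traceNorm_of_psd hP]
  set V : Matrix n n ℂ := (Matrix.IsHermitian.eigenvectorUnitary hG : Matrix n n ℂ) with hV
  have hVV : V * star V = 1 :=
    Matrix.mem_unitaryGroup_iff.mp (Matrix.IsHermitian.eigenvectorUnitary hG).2
  have hu : ∀ i, star ⇑(hG.eigenvectorBasis i) ⬝ᵥ ⇑(hG.eigenvectorBasis i) = 1 := by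
    intro i
    have := (orthonormal_iff_ite.mp hG.eigenvectorBasis.orthonormal) i i
    rw [EuclideanSpace.inner_eq_star_dotProduct, dotProduct_comm] at this
    simpa using this
  have hGu : ∀ i, star ⇑(hG.eigenvectorBasis i) ⬝ᵥ (G *ᵥ ⇑(hG.eigenvectorBasis i)) =
      ((hG.eigenvalues i : ℝ) : ℂ) := by
    intro i
    rw [hG.mulVec_eigenvectorBasis, dotProduct_smul, hu i]
    simp [Complex.real_smul]
  -- bound each eigenvalue
  have hbound : ∀ i, |hG.eigenvalues i| ≤
      υ * (star ⇑(hG.eigenvectorBasis i) ⬝ᵥ (P *ᵥ ⇑(hG.eigenvectorBasis i))).re := by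
    intro i
    have e1 := h1.dotProduct_mulVec_nonneg ⇑(hG.eigenvectorBasis i)
    have e2 := h2.dotProduct_mulVec_nonneg ⇑(hG.eigenvectorBasis i)
    rw [Matrix.sub_mulVec, Matrix.smul_mulVec, dotProduct_sub,
      dotProduct_smul, hGu i] at e1
    rw [Matrix.add_mulVec, Matrix.smul_mulVec, dotProduct_add,
      dotProduct_smul, hGu i] at e2
    rw [Complex.le_def] at e1 e2
    rw [abs_le]
    have r1 : 0 ≤ υ * (star ⇑(hG.eigenvectorBasis i) ⬝ᵥ (P *ᵥ ⇑(hG.eigenvectorBasis i))).re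
        - hG.eigenvalues i := by
      simpa [Complex.sub_re, Complex.smul_re] using e1.1
    have r2 : 0 ≤ υ * (star ⇑(hG.eigenvectorBasis i) ⬝ᵥ (P *ᵥ ⇑(hG.eigenvectorBasis i))).re
        + hG.eigenvalues i := by
      simpa [Complex.add_re, Complex.smul_re] using e2.1
    constructor <;> linarith
  have hsum : ∑ i, (star ⇑(hG.eigenvectorBasis i) ⬝ᵥ (P *ᵥ ⇑(hG.eigenvectorBasis i))) =
      P.trace := by
    have hdiag : ∀ i, star ⇑(hG.eigenvectorBasis i) ⬝ᵥ (P *ᵥ ⇑(hG.eigenvectorBasis i)) =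
        (Vᴴ * P * V) i i := by
      intro i
      simp only [dotProduct, Matrix.mulVec, dotProduct, Matrix.mul_apply,
        Matrix.conjTranspose_apply, Pi.star_apply, hV,
        Matrix.IsHermitian.eigenvectorUnitary_apply, Finset.sum_mul, Finset.mul_sum]
      rw [Finset.sum_comm]
      refine Finset.sum_congr rfl fun a _ => Finset.sum_congr rfl fun b _ => by
        simp only [RCLike.star_def]
        ring
    calc ∑ i, (star ⇑(hG.eigenvectorBasis i) ⬝ᵥ (P *ᵥ ⇑(hG.eigenvectorBasis i)))
        = (Vᴴ * P * V).trace := by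
          rw [Matrix.trace]; exact Finset.sum_congr rfl fun i _ => hdiag i
      _ = P.trace := by
          rw [Matrix.trace_mul_cycle, ← Matrix.star_eq_conjTranspose, hVV, Matrix.one_mul]
  calc ∑ i, |hG.eigenvalues i|
      ≤ ∑ i, υ * (star ⇑(hG.eigenvectorBasis i) ⬝ᵥ (P *ᵥ ⇑(hG.eigenvectorBasis i))).re :=
        Finset.sum_le_sum fun i _ => hbound i
    _ = υ * P.trace.re := by
        rw [← Finset.mul_sum]
        congr 1
        rw [← hsum, Complex.re_sum]

/-- Lemma on relatively-ordered channels: if channels `A, B` satisfy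
`(1−υ)A ⪯ B ⪯ (1+υ)A` (as CP maps), then for PSD `X` and `Y = Y_S ⊗ I`,
`‖Tr_S[(A−B)(X)·Y]‖₁ ≤ υ·‖Tr_S[A(X)·Y]‖₁`. -/
theorem trace_norm_relative_order_bound {s o : Type*}
    [Fintype s] [DecidableEq s] [Fintype o] [DecidableEq o]
    (A B : Matrix (s × o) (s × o) ℂ →ₗ[ℂ] Matrix (s × o) (s × o) ℂ)
    (hAcp : IsCompletelyPositive A) (hAtp : IsTracePreserving A)
    (hBcp : IsCompletelyPositive B) (hBtp : IsTracePreserving B)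
    (υ : ℝ) (hυ0 : 0 ≤ υ) (hυ1 : υ < 1)
    (hlow : IsCompletelyPositive (B - (((1 : ℝ) - υ : ℝ) : ℂ) • A))
    (hhigh : IsCompletelyPositive ((((1 : ℝ) + υ : ℝ) : ℂ) • A - B))
    (X : Matrix (s × o) (s × o) ℂ) (hX : X.PosSemidef)
    (YS : Matrix s s ℂ) (hYS : YS.PosSemidef) :
    traceNorm (ptraceS ((A X - B X) * (YS ⊗ₖ (1 : Matrix o o ℂ)))) ≤
      υ * traceNorm (ptraceS (A X * (YS ⊗ₖ (1 : Matrix o o ℂ)))) := by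
  set Y : Matrix (s × o) (s × o) ℂ := YS ⊗ₖ (1 : Matrix o o ℂ) with hY
  -- linearity of M ↦ ptraceS (M * Y)
  have Tsub : ∀ M N : Matrix (s × o) (s × o) ℂ,
      ptraceS ((M - N) * Y) = ptraceS (M * Y) - ptraceS (N * Y) := by
    intro M N
    ext i j
    simp [ptraceS, Matrix.sub_mul, Matrix.sub_apply, Finset.sum_sub_distrib]
  have Tsmul : ∀ (c : ℂ) (M : Matrix (s × o) (s × o) ℂ),
      ptraceS ((c • M) * Y) = c • ptraceS (M * Y) := by
    intro c M
    ext i j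
    simp [ptraceS, Matrix.smul_mul, Matrix.smul_apply, Finset.mul_sum]
  have Tadd : ∀ M N : Matrix (s × o) (s × o) ℂ,
      ptraceS ((M + N) * Y) = ptraceS (M * Y) + ptraceS (N * Y) := by
    intro M N
    ext i j
    simp [ptraceS, Matrix.add_mul, Matrix.add_apply, Finset.sum_add_distrib]
  -- PSD of ptraceS (W * Y) for PSD W
  have Tpsd : ∀ {W : Matrix (s × o) (s × o) ℂ}, W.PosSemidef →
      (ptraceS (W * Y)).PosSemidef := by
    intro W hW
    rw [hY, ptraceS_mul_kron W hYS]
    exact ptraceS_psd (hW.mul_mul_conjTranspose_same _)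
  -- the two PSD combinations
  have h1mat : ((υ : ℂ) • A X - (A X - B X)) = (B - (((1 : ℝ) - υ : ℝ) : ℂ) • A) X := by
    simp only [LinearMap.sub_apply, LinearMap.smul_apply]
    push_cast
    module
  have h2mat : ((υ : ℂ) • A X + (A X - B X)) = ((((1 : ℝ) + υ : ℝ) : ℂ) • A - B) X := by
    simp only [LinearMap.sub_apply, LinearMap.smul_apply]
    push_cast
    module
  have h1psd : ((υ : ℂ) • A X - (A X - B X)).PosSemidef := by
    rw [h1mat]; exact cp_psd hlow hX
  have h2psd : ((υ : ℂ) • A X + (A X - B X)).PosSemidef := by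
    rw [h2mat]; exact cp_psd hhigh hX
  -- apply the key inequality
  refine key_ineq υ (Tpsd (cp_psd hAcp hX)) ?_ ?_
  · rw [← Tsmul, ← Tsub]
    exact Tpsd h1psd
  · have : ((υ : ℂ)) • ptraceS (A X * Y) + ptraceS ((A X - B X) * Y) =
        ptraceS (((υ : ℂ) • A X + (A X - B X)) * Y) := by
      rw [Tadd, Tsmul]
    rw [this]
    exact Tpsd h2psd
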